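/- Let Γ be a graph on which a group G acts by automorphisms, N ⊲ G normal, and let α be a vertex of finite valency. Then the valency of the vertex Nα in the quotient graph N\Γ is at most the valency of α in Γ, with equality if and only if for every vertex β in the closed ball B(α,1), the intersection of the N-orbit of β with the vertex set of B(α,1) equals {β}. -/

import Mathlib

/-- The quotient graph `N\Γ`: vertices are `N`-orbits, and two distinct orbits are adjacent
iff they contain adjacent representatives. -/
def quotientGraph {G V : Type*} [Group G] [MulAction G V] (Γ : SimpleGraph V)
    (N : Subgroup G) : SimpleGraph (Quotient (MulAction.orbitRel N V)) where
  Adj x y := x ≠ y ∧ ∃ a b : V, (Quotient.mk'' a : Quotient (MulAction.orbitRel N V)) = x ∧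
    (Quotient.mk'' b : Quotient (MulAction.orbitRel N V)) = y ∧ Γ.Adj a b
  symm := by
    constructor
    rintro x y ⟨hne, a, b, ha, hb, hab⟩
    exact ⟨hne.symm, b, a, hb, ha, hab.symm⟩
  loopless := by
    constructor
    rintro x ⟨hne, -⟩
    exact hne rfl

/-- The valency of `Nα` in the quotient graph `N\Γ` is at most the valency of `α` in `Γ`;
for `α` of finite valency, equality holds iff for every vertex `β` of the closed ball
`B(α,1)`, the intersection of the `N`-orbit of `β` with `B(α,1)` is `{β}`. -/
theorem quotientGraph_valency {G V : Type*} [Group G] [MulAction G V] (Γ : SimpleGraph V)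
    (hact : ∀ (g : G) (a b : V), Γ.Adj (g • a) (g • b) ↔ Γ.Adj a b)
    (N : Subgroup G) [N.Normal] (α : V) (hfin : (Γ.neighborSet α).Finite) :
    ((quotientGraph Γ N).neighborSet (Quotient.mk'' α)).ncard ≤ (Γ.neighborSet α).ncard ∧
    (((quotientGraph Γ N).neighborSet (Quotient.mk'' α)).ncard = (Γ.neighborSet α).ncard ↔
      ∀ β ∈ ({α} ∪ Γ.neighborSet α : Set V),
        MulAction.orbit N β ∩ ({α} ∪ Γ.neighborSet α : Set V) = {β}) := by
  classical
  set S := Γ.neighborSet α with hS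
  set B : Set V := {α} ∪ S with hB
  set f : V → Quotient (MulAction.orbitRel N V) := Quotient.mk'' with hf
  have hmk : ∀ a b : V, f a = f b ↔ a ∈ MulAction.orbit N b := by
    intro a b
    rw [hf, Quotient.eq'']
    rfl
  -- key: neighborSet of mk α equals image minus {f α}
  have hkey : (quotientGraph Γ N).neighborSet (f α) = f '' S \ {f α} := by
    ext x
    constructor
    · rintro ⟨hne, a, b, ha, hb, hab⟩
      obtain ⟨n, hn⟩ := (hmk a α).mp ha
      have hn' : (n : G) • α = a := hn
      refine ⟨⟨(n : G)⁻¹ • b, ?_, ?_⟩, fun h => hne (Set.mem_singleton_iff.mp h).symm⟩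
      · have : Γ.Adj ((n : G) • α) ((n : G) • ((n : G)⁻¹ • b)) ↔ Γ.Adj α ((n : G)⁻¹ • b) :=
          hact n α ((n : G)⁻¹ • b)
        rw [smul_inv_smul] at this
        exact (this.mp (by rw [hn']; exact hab))
      · rw [← hb]
        exact (hmk _ b).mpr ⟨n⁻¹, rfl⟩
    · rintro ⟨⟨β, hβ, rfl⟩, hne⟩
      exact ⟨fun h => hne (Set.mem_singleton_iff.mpr h.symm), α, β, rfl, rfl, hβ⟩
  have hSfin : S.Finite := hfin
  have himfin : (f '' S).Finite := hSfin.image f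
  have h1 : ((quotientGraph Γ N).neighborSet (f α)).ncard ≤ S.ncard := by
    rw [hkey]
    exact le_trans (Set.ncard_le_ncard Set.diff_subset himfin) (Set.ncard_image_le hSfin)
  refine ⟨h1, ?_⟩
  -- RHS ↔ InjOn f B
  have hrhs : (∀ β ∈ B, MulAction.orbit N β ∩ B = {β}) ↔ Set.InjOn f B := by
    constructor
    · intro h β hβ γ hγ hfg
      have : β ∈ MulAction.orbit N γ ∩ B := ⟨(hmk β γ).mp hfg, hβ⟩
      rw [h γ hγ] at this
      exact this
    · intro h β hβ
      apply Set.eq_singleton_iff_unique_mem.mpr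
      refine ⟨⟨MulAction.mem_orbit_self β, hβ⟩, ?_⟩
      rintro γ ⟨hγo, hγB⟩
      exact h hγB hβ ((hmk γ β).mpr hγo)
  rw [hrhs, hkey]
  have hαS : α ∉ S := Γ.notMem_neighborSet_self
  constructor
  · intro heq
    have h2 : (f '' S \ {f α}).ncard ≤ (f '' S).ncard :=
      Set.ncard_le_ncard Set.diff_subset himfin
    have h3 : (f '' S).ncard ≤ S.ncard := Set.ncard_image_le hSfin
    have himg : (f '' S).ncard = S.ncard := le_antisymm h3 (by omega)
    have hinjS : Set.InjOn f S := Set.injOn_of_ncard_image_eq himg hSfin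
    have hnotmem : f α ∉ f '' S := by
      intro hmem
      have := Set.ncard_diff_singleton_lt_of_mem hmem himfin
      omega
    rintro β (hβ | hβ) γ (hγ | hγ) hfg
    · rw [hβ, hγ]
    · exact absurd ⟨γ, hγ, (hβ ▸ hfg).symm⟩ hnotmem
    · exact absurd ⟨β, hβ, hγ ▸ hfg⟩ hnotmem
    · exact hinjS hβ hγ hfg
  · intro hinj
    have hnotmem : f α ∉ f '' S := by
      rintro ⟨β, hβ, hfg⟩
      exact hαS (hinj (Or.inr hβ) (Or.inl rfl) hfg ▸ hβ)
    rw [Set.diff_singleton_eq_self hnotmem]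
    exact Set.ncard_image_of_injOn (hinj.mono Set.subset_union_right)
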